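/- For every real number x with 0 < |x| < π, 1/sin²(x) = 1/x² + Σ_{n=1}^∞ (2^(2n)·(2n−1)·|B₂ₙ|/(2n)!)·x^(2(n−1)), where the series converges to 1/sin²(x). -/

import Mathlib

open Real

noncomputable section Aux12

section Formal
open PowerSeries Complex Finset



def U : ℂ⟦X⟧ := rescale (2*I) (PowerSeries.exp ℂ)
def V : ℂ⟦X⟧ := rescale (-(2*I)) (PowerSeries.exp ℂ)
def B2 : ℂ⟦X⟧ := rescale (2*I) (bernoulliPowerSeries ℂ)
def Fc : ℂ⟦X⟧ := U * B2 * B2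
def Pc : ℂ⟦X⟧ := C (-4 : ℂ)⁻¹ * (U - 2 + V)
def Tc : ℂ⟦X⟧ := C I * X + B2

lemma rescale_X (a : ℂ) : rescale a (X : ℂ⟦X⟧) = C a * X := by
  ext n
  simp only [coeff_rescale, coeff_X, coeff_C_mul]
  rcases eq_or_ne n 1 with rfl | h
  · simp
  · simp [h]

lemma hUV : U * V = 1 := by
  rw [U, V, exp_mul_exp_eq_exp_add]
  simp [rescale_zero]

lemma hB : B2 * (U - 1) = C (2*I) * X := by
  have := congrArg (rescale (2*I)) (bernoulliPowerSeries_mul_exp_sub_one ℂ)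
  rw [map_mul, map_sub, map_one, rescale_X] at this
  exact this

lemma key_formal : Pc * Fc = X ^ 2 := by
  have h : (U - 2 + V) * (U * B2 * B2) = (B2 * (U - 1))^2 + (U * V - 1) * (B2 * B2) := by ring
  have h' : Pc * Fc = C (-4:ℂ)⁻¹ * ((B2 * (U-1))^2 + (U*V - 1)*(B2*B2)) := by
    rw [Pc, Fc, mul_assoc, h]
  have h4 : ((2*I : ℂ))^2 = -4 := by
    rw [mul_pow, I_sq]; norm_num
  rw [h', hUV, hB, sub_self, zero_mul, add_zero, mul_pow, ← map_pow, h4, ← mul_assoc,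
    ← map_mul]
  norm_num

lemma derivativeFun_C' (r : ℂ) : derivativeFun (C r : ℂ⟦X⟧) = 0 := derivative_C

lemma coeff_derivativeFun' (f : ℂ⟦X⟧) (n : ℕ) :
    coeff n f.derivativeFun = coeff (n + 1) f * (n + 1) := coeff_derivative f n

lemma hDX : derivativeFun (X : ℂ⟦X⟧) = 1 := by
  ext n
  rw [coeff_derivativeFun']
  rcases eq_or_ne n 0 with rfl | h
  · simp
  · rw [coeff_X, if_neg (by omega), coeff_one, if_neg h, zero_mul]

lemma fact_aux (n : ℕ) : ((n:ℂ)+1) * (((n+1).factorial : ℂ))⁻¹ = ((n.factorial : ℂ))⁻¹ := by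
  have h1 : ((n.factorial : ℂ)) ≠ 0 := Nat.cast_ne_zero.mpr n.factorial_ne_zero
  have h2 : (((n+1).factorial : ℂ)) ≠ 0 := Nat.cast_ne_zero.mpr (n+1).factorial_ne_zero
  field_simp
  rw [Nat.factorial_succ]
  push_cast
  ring

lemma hDU : derivativeFun U = C (2*I) * U := by
  ext n
  simp only [coeff_derivativeFun', coeff_C_mul, U, coeff_rescale, coeff_exp, one_div,
    map_inv₀, map_natCast]
  push_cast
  linear_combination (2*I)^n * (2*I) * fact_aux n

lemma hDB2 : (U - 1) * derivativeFun B2 = C (2*I) - B2 * (C (2*I) * U) := by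
  have h2 : derivativeFun (U - 1) = C (2*I) * U := by
    rw [sub_eq_add_neg, derivativeFun_add, ← map_one C, ← map_neg C, derivativeFun_C',
      add_zero, hDU]
  have h := congrArg derivativeFun hB
  simp only [derivativeFun_mul, derivativeFun_C', smul_eq_mul, smul_zero, add_zero, hDX,
    mul_one, h2] at h
  linear_combination h

lemma hU1ne : U - 1 ≠ 0 := by
  intro h
  have h0 := congrArg (coeff 1) h
  rw [map_sub, coeff_one, U, coeff_rescale, coeff_exp] at h0
  simp [Nat.factorial, I_ne_zero] at h0

lemma hFc_eq : Tc - X * derivativeFun Tc = Fc := by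
  have hDT : derivativeFun Tc = C I + derivativeFun B2 := by
    rw [Tc, derivativeFun_add, derivativeFun_mul, derivativeFun_C', smul_zero, add_zero,
      hDX, smul_eq_mul, mul_one]
  have hcan : (Tc - X * derivativeFun Tc) * (U-1)^2 = Fc * (U-1)^2 := by
    rw [hDT, Tc, Fc]
    linear_combination (-(X*(U-1))) * hDB2 + ((U-1) - U*B2*(U-1)) * hB
  exact mul_right_cancel₀ (pow_ne_zero 2 hU1ne) hcan

lemma coeff_Fc (n : ℕ) : coeff n Fc = (1 - n : ℂ) * coeff n Tc := by
  rw [← hFc_eq, map_sub]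
  cases n with
  | zero => simp
  | succ m =>
    rw [coeff_succ_X_mul, coeff_derivativeFun']
    push_cast
    ring

/-- real coefficients of `Fc` -/
def fr : ℕ → ℝ := fun n =>
  if Even n then ((1:ℝ) - n) * (-4)^(n/2) * ((bernoulli n : ℚ) : ℝ) / n.factorial else 0

/-- real coefficients of `Pc` -/
def sr : ℕ → ℝ := fun n =>
  if n ≠ 0 ∧ Even n then (-1)^(n/2+1) * 2^(n-1) / n.factorial else 0

lemma coeff_Tc (n : ℕ) :
    coeff n Tc = I * (if n = 1 then 1 else 0)
      + (2*I)^n * ((bernoulli n : ℂ) / (n.factorial : ℂ)) := by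
  rw [Tc, map_add, coeff_C_mul, coeff_X, B2, coeff_rescale, bernoulliPowerSeries, coeff_mk]
  congr 1
  rw [eq_ratCast]
  push_cast
  ring

lemma castF (n : ℕ) : ((fr n : ℂ)) = coeff n Fc := by
  rw [coeff_Fc, coeff_Tc, fr]
  rcases Nat.even_or_odd n with he | ho
  · obtain ⟨m, rfl⟩ := he
    rw [if_pos ⟨m, rfl⟩, if_neg (by omega)]
    have : ((2*I : ℂ))^(m+m) = (-4 : ℂ)^((m+m)/2) := by
      rw [show m + m = 2*m by ring, pow_mul, mul_pow, I_sq, Nat.mul_div_cancel_left m (by norm_num)]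
      norm_num
    rw [mul_zero, zero_add, this]
    push_cast
    field_simp
  · rw [if_neg (by simpa [Nat.not_even_iff_odd] using ho)]
    rcases eq_or_ne n 1 with rfl | h1
    · push_cast; ring
    · have hb : bernoulli n = 0 := by
        rw [bernoulli_eq_bernoulli'_of_ne_one h1]
        exact bernoulli'_eq_zero_of_odd ho (by rcases ho with ⟨m, rfl⟩; omega)
      rw [if_neg h1, hb]
      push_cast
      ring

lemma castS (n : ℕ) : ((sr n : ℂ)) = coeff n Pc := by
  have h2 : ((2 : ℂ⟦X⟧)) = C 2 := by rw [map_ofNat]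
  rw [Pc, coeff_C_mul, map_add, map_sub, h2, coeff_C, U, V, coeff_rescale, coeff_rescale,
    coeff_exp, sr]
  rcases Nat.even_or_odd n with he | ho
  · rcases eq_or_ne n 0 with rfl | h0
    · simp; ring
    · obtain ⟨m, rfl⟩ := he
      rw [if_pos ⟨h0, ⟨m, rfl⟩⟩, if_neg h0]
      have hI : ((2*I : ℂ))^(m+m) = (-4 : ℂ)^m ∧ ((-(2*I) : ℂ))^(m+m) = (-4 : ℂ)^m := by
        constructor <;>
        · rw [show m + m = 2*m by ring, pow_mul]
          norm_num [mul_pow, I_sq]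
      rw [hI.1, hI.2, eq_ratCast]
      have hm : 0 < m := by omega
      have h4 : ((-4 : ℂ))^m = (-1)^m * 2^(m+m) := by
        rw [show ((-4:ℂ)) = (-1) * 2^2 by norm_num, mul_pow, ← pow_mul, two_mul]
      have hfac : (((m+m).factorial : ℂ)) ≠ 0 := Nat.cast_ne_zero.mpr (Nat.factorial_ne_zero _)
      rw [h4]
      push_cast
      field_simp
      rw [show (m+m)/2 = m by omega, show (2:ℂ)^(m+m) = 2^(m+m-1)*2 from by
        rw [← pow_succ]; congr 1; omega]
      ring
  · obtain ⟨m, rfl⟩ := ho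
    rw [if_neg (fun h => (Nat.even_add_one.mp h.2) (even_two_mul m))]
    have hI : ((-(2*I) : ℂ))^(2*m+1) = -((2*I : ℂ))^(2*m+1) := by
      rw [neg_pow]
      simp [pow_succ]
    rw [hI, if_neg (by omega)]
    push_cast
    ring

lemma coeff_identity (n : ℕ) :
    (∑ k ∈ Finset.range (n+1), sr k * fr (n - k)) = if n = 2 then 1 else 0 := by
  have h := congrArg (coeff n) key_formal
  rw [coeff_mul,
    Nat.sum_antidiagonal_eq_sum_range_succ (fun i j => coeff i Pc * coeff j Fc),
    coeff_X_pow] at h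
  have hs : ((∑ k ∈ Finset.range (n+1), sr k * fr (n - k) : ℝ) : ℂ)
      = ∑ k ∈ Finset.range (n+1), coeff k Pc * coeff (n-k) Fc := by
    push_cast
    exact Finset.sum_congr rfl fun k _ => by rw [castS, castF]
  rw [h] at hs
  split_ifs at hs ⊢ <;> exact_mod_cast hs

end Formal

section Analytic
open Finset


lemma bern_pos (m : ℕ) (hm : m ≠ 0) :
    (0:ℝ) < (-1)^(m+1) * ((bernoulli (2*m) : ℚ) : ℝ) := by
  have hz := hasSum_zeta_nat hm
  have hF : (0:ℝ) < (2*m).factorial := by positivity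
  have h1 : (1:ℝ) ≤ (-1 : ℝ) ^ (m + 1) * (2 : ℝ) ^ (2 * m - 1) * π ^ (2 * m) *
      ((bernoulli (2 * m) : ℚ) : ℝ) / (2 * m).factorial := by
    have := le_hasSum hz 1 (fun j _ => by positivity)
    simpa using this
  have hP : (0:ℝ) < (2:ℝ)^(2*m-1) * π^(2*m) := by positivity
  have hA : (0:ℝ) < (-1 : ℝ) ^ (m + 1) * (2 : ℝ) ^ (2 * m - 1) * π ^ (2 * m) *
      ((bernoulli (2 * m) : ℚ) : ℝ) := by
    rw [le_div_iff₀ hF, one_mul] at h1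
    linarith
  have heq : (-1:ℝ)^(m+1) * ((bernoulli (2*m) : ℚ) : ℝ)
      = ((-1 : ℝ) ^ (m + 1) * (2 : ℝ) ^ (2 * m - 1) * π ^ (2 * m) *
        ((bernoulli (2 * m) : ℚ) : ℝ)) / ((2:ℝ)^(2*m-1) * π^(2*m)) := by
    field_simp
  rw [heq]
  exact div_pos hA hP

lemma bern_abs (m : ℕ) (hm : m ≠ 0) :
    |((bernoulli (2*m) : ℚ) : ℝ)| = (-1)^(m+1) * ((bernoulli (2*m) : ℚ) : ℝ) := by
  have h := bern_pos m hm
  have h2 : |(-1:ℝ)^(m+1) * ((bernoulli (2*m) : ℚ) : ℝ)|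
      = (-1)^(m+1) * ((bernoulli (2*m) : ℚ) : ℝ) := abs_of_pos h
  rwa [abs_mul, abs_pow, abs_neg, abs_one, one_pow, one_mul] at h2

lemma bern_div_le (m : ℕ) (hm : m ≠ 0) :
    |((bernoulli (2*m) : ℚ) : ℝ)| / (2*m).factorial ≤ π^2 / (3 * 4^m * π^(2*m)) := by
  have hz := hasSum_zeta_nat hm
  have hle : (-1 : ℝ) ^ (m + 1) * (2 : ℝ) ^ (2 * m - 1) * π ^ (2 * m) *
      ((bernoulli (2 * m) : ℚ) : ℝ) / (2 * m).factorial ≤ π^2/6 := by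
    refine hasSum_le (fun n => ?_) hz hasSum_zeta_two
    rcases Nat.eq_zero_or_pos n with rfl | hn
    · norm_num [zero_pow (by omega : 2*m ≠ 0)]
    · have h1n : (1:ℝ) ≤ n := by exact_mod_cast hn
      exact one_div_le_one_div_of_le (by positivity)
        (by calc ((n:ℝ))^2 = (n:ℝ)^(2*1) := by ring
              _ ≤ (n:ℝ)^(2*m) := pow_le_pow_right₀ h1n (by omega))
  have hF : (0:ℝ) < ((2*m).factorial : ℝ) := by positivity
  have hpow : ((2:ℝ))^(2*m-1) = 4^m / 2 := by
    rw [eq_div_iff (by norm_num : (2:ℝ) ≠ 0), ← pow_succ, show (4:ℝ) = 2^2 by norm_num,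
      ← pow_mul]
    congr 1
    omega
  rw [hpow, div_le_div_iff₀ hF (by norm_num : (0:ℝ) < 6)] at hle
  rw [bern_abs m hm, div_le_div_iff₀ hF (by positivity)]
  nlinarith [hle]

end Analytic

lemma fr_zero : fr 0 = 1 := by norm_num [fr]

lemma fr_odd (n : ℕ) (h : ¬ Even n) : fr n = 0 := by simp [fr, h]

lemma fr_even_eq (m : ℕ) (hm : m ≠ 0) :
    fr (2*m) = ((2*m : ℝ) - 1) * 4^m * |((bernoulli (2*m) : ℚ) : ℝ)| / (2*m).factorial := by
  rw [fr, if_pos (even_two_mul m), Nat.mul_div_cancel_left m (by norm_num), bern_abs m hm]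
  have : ((-4 : ℝ))^m = (-1)^m * 4^m := by rw [neg_pow]
  rw [this]
  push_cast
  rcases Nat.even_or_odd m with he | ho
  · rw [he.neg_one_pow, Odd.neg_one_pow he.add_one]
    ring
  · rw [ho.neg_one_pow, Even.neg_one_pow ho.add_one]
    ring

lemma fr_bound (m : ℕ) (hm : m ≠ 0) : |fr (2*m)| ≤ (π^2/3) * (2*m) / π^(2*m) := by
  have h2m : (1:ℝ) ≤ (2*m : ℕ) := by exact_mod_cast Nat.one_le_iff_ne_zero.mpr (by omega)
  have hnn : (0:ℝ) ≤ ((2*m:ℕ) : ℝ) - 1 := by push_cast at h2m ⊢; linarith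
  have hd := bern_div_le m hm
  rw [fr_even_eq m hm]
  have heq : ((2*m : ℝ) - 1) * 4^m * |((bernoulli (2*m) : ℚ) : ℝ)| / (2*m).factorial
      = (((2*m : ℝ) - 1) * 4^m) * (|((bernoulli (2*m) : ℚ) : ℝ)| / (2*m).factorial) := by ring
  have habs : |((2*m : ℝ) - 1) * 4^m * |((bernoulli (2*m) : ℚ) : ℝ)| / (2*m).factorial|
      = ((2*m : ℝ) - 1) * 4^m * |((bernoulli (2*m) : ℚ) : ℝ)| / (2*m).factorial := by
    apply abs_of_nonneg
    push_cast at hnn ⊢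
    positivity
  rw [habs, heq]
  calc (((2*m : ℝ) - 1) * 4^m) * (|((bernoulli (2*m) : ℚ) : ℝ)| / (2*m).factorial)
      ≤ (((2*m : ℝ) - 1) * 4^m) * (π^2 / (3 * 4^m * π^(2*m))) := by
        apply mul_le_mul_of_nonneg_left hd
        push_cast at hnn ⊢
        positivity
    _ ≤ (π^2/3) * (2*m) / π^(2*m) := by
        have h4 : (0:ℝ) < (4:ℝ)^m := by positivity
        have hπ : (0:ℝ) < π^(2*m) := by positivity
        have heq2 : (((2*m : ℝ)) - 1) * 4^m * (π^2/(3*4^m*π^(2*m)))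
            = (((2*m:ℝ)) - 1) * π^2/(3*π^(2*m)) := by
          field_simp
        push_cast at heq2 ⊢
        rw [heq2, div_le_div_iff₀ (by positivity : (0:ℝ) < 3*π^(2*m)) hπ]
        nlinarith [mul_nonneg (le_of_lt hπ) (sq_nonneg π)]

lemma summable_fr {x : ℝ} (hx : |x| < π) : Summable (fun n => ‖fr n * x^n‖) := by
  set ρ : ℝ := |x| / π with hρdef
  have hρ0 : 0 ≤ ρ := by positivity
  have hρ : ρ < 1 := by
    rw [hρdef, div_lt_one pi_pos]; exact hx
  have hb : Summable (fun n : ℕ => (π^2/3) * ((n:ℝ) * ρ^n) + (if n = 0 then 1 else 0)) := by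
    apply Summable.add
    · apply Summable.mul_left
      simpa [pow_one] using
        summable_pow_mul_geometric_of_norm_lt_one 1 (by rwa [Real.norm_eq_abs, abs_of_nonneg hρ0])
    · exact (hasSum_ite_eq 0 (1:ℝ)).summable
  apply hb.of_nonneg_of_le (fun n => norm_nonneg _)
  intro n
  rcases eq_or_ne n 0 with rfl | h0
  · simp [fr_zero]
  rcases Nat.even_or_odd n with ⟨m, rfl⟩ | ho
  · have hm : m ≠ 0 := by omega
    rw [show m + m = 2*m by ring]
    have hb1 : ‖fr (2*m) * x^(2*m)‖ ≤ ((π^2/3) * (2*m) / π^(2*m)) * |x|^(2*m) := by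
      rw [norm_mul, Real.norm_eq_abs, Real.norm_eq_abs, abs_pow]
      exact mul_le_mul_of_nonneg_right (fr_bound m hm) (by positivity)
    refine hb1.trans ?_
    have heq3 : ((π^2/3) * (2*m) / π^(2*m)) * |x|^(2*m) = (π^2/3) * (((2*m : ℕ):ℝ) * ρ^(2*m)) := by
      rw [hρdef, div_pow]
      push_cast
      field_simp
    rw [heq3]
    simp [hm]
  · rw [fr_odd _ (by simpa [Nat.not_even_iff_odd] using ho)]
    have : (0:ℝ) ≤ (π^2/3) * ((n:ℝ) * ρ^n) := by positivity
    simp only [zero_mul, norm_zero]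
    split_ifs <;> linarith

lemma sr_odd (n : ℕ) (h : ¬ (n ≠ 0 ∧ Even n)) : sr n = 0 := by simp [sr, h]

lemma summable_sr (x : ℝ) : Summable (fun n => ‖sr n * x^n‖) := by
  apply (Real.summable_pow_div_factorial (2*|x|)).of_nonneg_of_le (fun n => norm_nonneg _)
  intro n
  by_cases h : n ≠ 0 ∧ Even n
  · have h1 : |sr n| ≤ 2^n / n.factorial := by
      rw [sr, if_pos h, abs_div, abs_mul, abs_pow, abs_pow, abs_neg, abs_one, one_pow, one_mul,
        abs_two, Nat.abs_cast]
      apply div_le_div_of_nonneg_right ?_ (by positivity)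
      · exact pow_le_pow_right₀ one_le_two (by omega)
    have : ‖sr n * x^n‖ = |sr n| * |x|^n := by
      rw [norm_mul, Real.norm_eq_abs, Real.norm_eq_abs, abs_pow]
    rw [this, mul_pow]
    calc |sr n| * |x|^n ≤ (2^n / n.factorial) * |x|^n :=
          mul_le_mul_of_nonneg_right h1 (by positivity)
      _ = 2^n * |x|^n / n.factorial := by ring
  · rw [sr_odd n h]
    simp only [zero_mul, norm_zero]
    positivity

lemma hs_sin2 (x : ℝ) : HasSum (fun n => sr n * x^n) (Real.sin x^2) := by
  have hc := (Real.hasSum_cos (2*x)).mul_left (-(1/2) : ℝ)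
  have hu := hc.update 0 0
  have hfun : Function.update
        (fun m : ℕ => -(1/2) * ((-1)^m * (2*x)^(2*m) / (2*m).factorial)) 0 0
      = fun m : ℕ => sr (2*m) * x^(2*m) := by
    funext m
    cases m with
    | zero => simp [sr]
    | succ k =>
      rw [Function.update_of_ne (by omega)]
      rw [sr, if_pos ⟨by omega, even_two_mul _⟩, Nat.mul_div_cancel_left _ (by norm_num),
        mul_pow, show 2*(k+1) - 1 = 2*k+1 by omega]
      have h2 : ((-1:ℝ))^(k+1+1) = (-1)^(k+1) * (-1) := by ring
      rw [h2]
      field_simp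
      ring
  have hval : (0:ℝ) - (-(1/2) * ((-1)^(0:ℕ) * (2*x)^(2*0) / ((2*0).factorial : ℕ))) +
      (-(1/2) * Real.cos (2*x)) = Real.sin x ^ 2 := by
    rw [Real.sin_sq_eq_half_sub]
    norm_num
    ring
  rw [hfun] at hu
  have hu2 : HasSum (fun m : ℕ => sr (2*m) * x^(2*m)) (Real.sin x ^ 2) := by
    rw [← hval]
    exact hu
  have hinj : Function.Injective (fun m : ℕ => 2*m) := fun a b h => by
    simp only at h
    omega
  refine (Function.Injective.hasSum_iff hinj ?_).1 hu2
  intro n hn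
  have hodd : ¬ Even n := by
    intro ⟨m, hm⟩
    exact hn ⟨m, by simp only []; omega⟩
  rw [sr_odd n (by tauto), zero_mul]

theorem stmt_12 (x : ℝ) (hx₀ : 0 < |x|) (hxπ : |x| < π) :
    HasSum
      (fun n : ℕ =>
        (2 : ℝ) ^ (2 * (n + 1)) * (2 * (n + 1) - 1 : ℝ) * |((bernoulli (2 * (n + 1)) : ℚ) : ℝ)| /
            (Nat.factorial (2 * (n + 1)) : ℝ) * x ^ (2 * n))
      (1 / Real.sin x ^ 2 - 1 / x ^ 2) := by
  have hx0 : x ≠ 0 := by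
    intro h; rw [h, abs_zero] at hx₀; exact lt_irrefl 0 hx₀
  obtain ⟨hl, hr⟩ := abs_lt.mp hxπ
  have hsin : Real.sin x ≠ 0 := by
    rw [Ne, Real.sin_eq_zero_iff_of_lt_of_lt hl hr]
    exact hx0
  have Sf := summable_fr hxπ
  have Ss := summable_sr x
  have hG : HasSum (fun n => fr n * x^n) (∑' n, fr n * x^n) := Sf.of_norm.hasSum
  set G := ∑' n, fr n * x^n with hGdef
  have hkey := hasSum_sum_range_mul_of_summable_norm Ss Sf
  rw [(hs_sin2 x).tsum_eq] at hkey
  have hterm : (fun n => ∑ k ∈ Finset.range (n+1), (sr k * x^k) * (fr (n-k) * x^(n-k)))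
      = fun n => if n = 2 then x^2 else 0 := by
    funext n
    have hc : ∀ k ∈ Finset.range (n+1),
        (sr k * x^k) * (fr (n-k) * x^(n-k)) = (sr k * fr (n-k)) * x^n := by
      intro k hk
      have hkn : k ≤ n := by simpa [Nat.lt_succ_iff] using hk
      rw [show (sr k * x^k) * (fr (n-k) * x^(n-k)) = (sr k * fr (n-k)) * (x^k * x^(n-k)) by ring,
        ← pow_add, Nat.add_sub_cancel' hkn]
    rw [Finset.sum_congr rfl hc, ← Finset.sum_mul, coeff_identity n]
    split_ifs with h <;> simp [h]
  rw [hterm] at hkey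
  have hx2 : Real.sin x^2 * G = x^2 := hkey.unique (hasSum_ite_eq 2 (x^2))
  have hinj : Function.Injective (fun m : ℕ => 2*m) := fun a b h => by
    simp only at h
    omega
  have hEven : HasSum (fun m : ℕ => fr (2*m) * x^(2*m)) G := by
    refine (Function.Injective.hasSum_iff hinj ?_).2 hG
    intro n hn
    have hodd : ¬ Even n := by
      intro ⟨m, hm⟩
      exact hn ⟨m, by simp only []; omega⟩
    rw [fr_odd n hodd, zero_mul]
  have hTail : HasSum (fun m : ℕ => fr (2*(m+1)) * x^(2*(m+1))) (G - 1) := by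
    refine (hasSum_nat_add_iff (f := fun m : ℕ => fr (2*m) * x^(2*m)) 1).2 ?_
    have h1 : G - 1 + ∑ i ∈ Finset.range 1, fr (2*i) * x^(2*i) = G := by
      simp [fr_zero]
    rw [h1]
    exact hEven
  have hDiv := hTail.div_const (x^2)
  have hs2 : Real.sin x ^ 2 ≠ 0 := pow_ne_zero 2 hsin
  have hx2' : x^(2:ℕ) ≠ 0 := pow_ne_zero 2 hx0
  have hval : (G - 1) / x^2 = 1 / Real.sin x^2 - 1 / x^2 := by
    have hG2 : G = x^2 / Real.sin x^2 := by
      rw [eq_div_iff hs2]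
      linear_combination hx2
    rw [hG2]
    field_simp
  rw [hval] at hDiv
  have hfe : (fun m : ℕ => fr (2*(m+1)) * x^(2*(m+1)) / x^2)
      = (fun n : ℕ =>
        (2 : ℝ) ^ (2 * (n + 1)) * (2 * (n + 1) - 1 : ℝ) * |((bernoulli (2 * (n + 1)) : ℚ) : ℝ)| /
            (Nat.factorial (2 * (n + 1)) : ℝ) * x ^ (2 * n)) := by
    funext m
    rw [fr_even_eq (m+1) (Nat.succ_ne_zero m)]
    have hxp : x^(2*(m+1)) = x^(2*m) * x^2 := by ring
    have h4 : (2:ℝ)^(2*(m+1)) = 4^(m+1) := by rw [pow_mul]; norm_num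
    rw [hxp, h4]
    field_simp
    push_cast
    ring
  rw [hfe] at hDiv
  exact hDiv

end Aux12
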